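/- There exists a universal constant C > 0 such that for every 0 < ρ ≤ 1 and every x̃ ∈ ℝ with |x̃| ≤ ρ, one has ∫_0^2 ∫_{-ρ}^{ρ} (4πt)^{-1} exp(-(x̃ - ỹ)²/(4t)) dỹ dt ≥ C · σ · ln(1 + 1/σ), where σ = 2ρ is the length of the interval (-ρ, ρ). -/

import Mathlib

open MeasureTheory Real

/-- There is a universal `C > 0` such that for every `0 < ρ ≤ 1` and every `x̃ ∈ ℝ` with
`|x̃| ≤ ρ`, `∫_0^2 ∫_{-ρ}^{ρ} (4πt)⁻¹ exp(-(x̃-ỹ)²/(4t)) dỹ dt ≥ C σ ln(1 + 1/σ)`,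
where `σ = 2ρ`. -/
theorem stmt_7 :
    ∃ C > (0:ℝ), ∀ ρ : ℝ, 0 < ρ → ρ ≤ 1 → ∀ x : ℝ, |x| ≤ ρ →
      C * ((2 * ρ) * Real.log (1 + 1 / (2 * ρ))) ≤
        ∫ t in Set.Ioo (0:ℝ) 2, ∫ y in Set.Ioo (-ρ) ρ,
          (4 * Real.pi * t)⁻¹ * Real.exp (-(x - y) ^ 2 / (4 * t)) := by
  refine ⟨(4 * Real.pi * Real.exp 1)⁻¹, by positivity, ?_⟩
  intro ρ hρ hρ1 x hx
  have hπ : (0:ℝ) < Real.pi := Real.pi_pos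
  set F : ℝ → ℝ → ℝ := fun t y => (4 * Real.pi * t)⁻¹ * Real.exp (-(x - y) ^ 2 / (4 * t))
    with hFdef
  set f : ℝ → ℝ := fun t => ∫ y in Set.Ioo (-ρ) ρ, F t y with hfdef
  -- continuity of F t in y
  have hFc : ∀ t : ℝ, Continuous (F t) := by
    intro t
    apply Continuous.mul continuous_const
    exact (Real.continuous_exp.comp (by fun_prop))
  have hFint : ∀ t : ℝ, IntegrableOn (F t) (Set.Ioo (-ρ) ρ) := fun t =>
    ((hFc t).integrableOn_Icc).mono_set Set.Ioo_subset_Icc_self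
  -- nonnegativity of f on (0,2)
  have hfnn : ∀ t ∈ Set.Ioo (0:ℝ) 2, 0 ≤ f t := by
    intro t ht
    apply setIntegral_nonneg measurableSet_Ioo
    intro y _
    have : (0:ℝ) < 4 * Real.pi * t := by nlinarith [ht.1]
    positivity
  -- measurability of f on restrict
  have hmeas : AEStronglyMeasurable f (volume.restrict (Set.Ioo (0:ℝ) 2)) := by
    have : AEStronglyMeasurable (fun p : ℝ × ℝ => F p.1 p.2)
        ((volume.restrict (Set.Ioo (0:ℝ) 2)).prod (volume.restrict (Set.Ioo (-ρ) ρ))) := by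
      apply Measurable.aestronglyMeasurable
      fun_prop
    exact this.integral_prod_right'
  -- pointwise bound f t ≤ t ^ (-(1/2) : ℝ) for t ∈ (0,2)
  have hbound : ∀ t ∈ Set.Ioo (0:ℝ) 2, f t ≤ t ^ (-(1/2) : ℝ) := by
    intro t ht
    have ht0 : (0:ℝ) < t := ht.1
    have hb : (0:ℝ) < (4*t)⁻¹ := by positivity
    have hG : Integrable (fun y : ℝ => Real.exp (-(x - y) ^ 2 / (4 * t))) := by
      have : Integrable (fun y : ℝ => Real.exp (-(4*t)⁻¹ * (y - x) ^ 2)) :=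
        (integrable_exp_neg_mul_sq hb).comp_sub_right x
      apply this.congr
      filter_upwards with y
      ring_nf
    have h1 : f t ≤ (4 * Real.pi * t)⁻¹ * ∫ y : ℝ, Real.exp (-(x - y) ^ 2 / (4 * t)) := by
      rw [hfdef]
      simp only [hFdef]
      rw [integral_const_mul]
      apply mul_le_mul_of_nonneg_left _ (by positivity)
      exact setIntegral_le_integral hG (by filter_upwards with y using (Real.exp_pos _).le)
    have h2 : ∫ y : ℝ, Real.exp (-(x - y) ^ 2 / (4 * t)) = Real.sqrt (Real.pi / (4*t)⁻¹) := by
      rw [← integral_gaussian ((4*t)⁻¹)]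
      rw [← integral_sub_right_eq_self (fun y => Real.exp (-(4*t)⁻¹ * y ^ 2)) x]
      congr 1 with y
      ring_nf
    have h3 : Real.sqrt (Real.pi / (4*t)⁻¹) = Real.sqrt (4 * Real.pi) * Real.sqrt t := by
      rw [← Real.sqrt_mul (by positivity)]
      congr 1
      field_simp
    calc f t ≤ (4 * Real.pi * t)⁻¹ * (Real.sqrt (4 * Real.pi) * Real.sqrt t) := by
              rw [← h3, ← h2]; exact h1
      _ ≤ (Real.sqrt t)⁻¹ := by
          have hsqt : (0:ℝ) < Real.sqrt t := Real.sqrt_pos.mpr ht0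
          have hsqp : (1:ℝ) ≤ Real.sqrt (4 * Real.pi) := by
            rw [show (1:ℝ) = Real.sqrt 1 by simp]
            exact Real.sqrt_le_sqrt (by nlinarith [Real.pi_gt_three])
          have e1 : Real.sqrt (4*Real.pi) * Real.sqrt (4*Real.pi) = 4 * Real.pi :=
            Real.mul_self_sqrt (by positivity)
          have e2 : Real.sqrt t * Real.sqrt t = t := Real.mul_self_sqrt ht0.le
          have e3 : (Real.sqrt (4*Real.pi) * Real.sqrt t) * (Real.sqrt (4*Real.pi) * Real.sqrt t)
              = 4 * Real.pi * t := by
            calc (Real.sqrt (4*Real.pi) * Real.sqrt t) * (Real.sqrt (4*Real.pi) * Real.sqrt t)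
                = (Real.sqrt (4*Real.pi) * Real.sqrt (4*Real.pi)) * (Real.sqrt t * Real.sqrt t) := by
                  ring
              _ = 4 * Real.pi * t := by rw [e1, e2]
          have e4 : (4 * Real.pi * t)⁻¹ * (Real.sqrt (4 * Real.pi) * Real.sqrt t)
              = (Real.sqrt (4*Real.pi))⁻¹ * (Real.sqrt t)⁻¹ := by
            rw [← e3]
            field_simp
          rw [e4]
          exact mul_le_of_le_one_left (by positivity) (inv_le_one_of_one_le₀ hsqp)
      _ = t ^ (-(1/2) : ℝ) := by
          rw [Real.rpow_neg ht0.le, ← Real.sqrt_eq_rpow]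
  -- integrability of f on (0,2)
  have hg : IntegrableOn (fun t : ℝ => t ^ (-(1/2) : ℝ)) (Set.Ioo (0:ℝ) 2) :=
    (intervalIntegral.integrableOn_Ioo_rpow_iff two_pos).mpr (by norm_num)
  have hfint : IntegrableOn f (Set.Ioo (0:ℝ) 2) := by
    apply Integrable.mono' hg hmeas
    filter_upwards [ae_restrict_mem measurableSet_Ioo] with t ht
    rw [Real.norm_eq_abs, abs_of_nonneg (hfnn t ht)]
    exact hbound t ht
  have hρ2 : (0:ℝ) < ρ^2 := by positivity
  have hρ2lt : ρ^2 < 2 := by nlinarith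
  have hsub : Set.Ioo (ρ^2) 2 ⊆ Set.Ioo (0:ℝ) 2 := Set.Ioo_subset_Ioo_left hρ2.le
  -- lower bound for f on (ρ², 2)
  have hlow : ∀ t ∈ Set.Ioo (ρ^2) 2,
      (4 * Real.pi * t)⁻¹ * (Real.exp 1)⁻¹ * (2*ρ) ≤ f t := by
    intro t ht
    have ht0 : (0:ℝ) < t := lt_trans hρ2 ht.1
    have hc : (0:ℝ) < (4 * Real.pi * t)⁻¹ := by positivity
    have key : ∀ y ∈ Set.Ioo (-ρ) ρ, (4 * Real.pi * t)⁻¹ * (Real.exp 1)⁻¹ ≤ F t y := by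
      intro y hy
      apply mul_le_mul_of_nonneg_left _ hc.le
      rw [← Real.exp_neg]
      apply Real.exp_le_exp.mpr
      have hx' := abs_le.mp hx
      have hsq : (x - y)^2 ≤ 4 * t := by nlinarith [hy.1, hy.2, ht.1]
      rw [neg_div, neg_le_neg_iff]
      exact (div_le_one (by positivity)).mpr (by linarith)
    calc (4 * Real.pi * t)⁻¹ * (Real.exp 1)⁻¹ * (2*ρ)
        = ∫ _ in Set.Ioo (-ρ) ρ, (4 * Real.pi * t)⁻¹ * (Real.exp 1)⁻¹ := by
          rw [setIntegral_const, measureReal_def, Real.volume_Ioo, ENNReal.toReal_ofReal (by linarith),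
            smul_eq_mul]
          ring
      _ ≤ ∫ y in Set.Ioo (-ρ) ρ, F t y := by
          apply setIntegral_mono_on _ (hFint t) measurableSet_Ioo key
          exact integrableOn_const measure_Ioo_lt_top.ne
  -- first comparison
  have hcint : IntegrableOn (fun t : ℝ => (4 * Real.pi * t)⁻¹ * (Real.exp 1)⁻¹ * (2*ρ))
      (Set.Ioo (ρ^2) 2) := by
    apply (ContinuousOn.integrableOn_compact isCompact_Icc ?_).mono_set Set.Ioo_subset_Icc_self
    apply ContinuousOn.mul (ContinuousOn.mul ?_ continuousOn_const) continuousOn_const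
    apply ContinuousOn.inv₀ (by fun_prop)
    intro t ht
    have : (0:ℝ) < t := lt_of_lt_of_le hρ2 ht.1
    positivity
  have step1 : ∫ t in Set.Ioo (ρ^2) 2, (4 * Real.pi * t)⁻¹ * (Real.exp 1)⁻¹ * (2*ρ)
      ≤ ∫ t in Set.Ioo (ρ^2) 2, f t :=
    setIntegral_mono_on hcint (hfint.mono_set hsub) measurableSet_Ioo hlow
  have step2 : ∫ t in Set.Ioo (ρ^2) 2, f t ≤ ∫ t in Set.Ioo (0:ℝ) 2, f t := by
    apply setIntegral_mono_set hfint _ hsub.eventuallyLE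
    filter_upwards [ae_restrict_mem measurableSet_Ioo] with t ht using hfnn t ht
  -- value of the lower integral
  have hcalc : ∫ t in Set.Ioo (ρ^2) 2, (4 * Real.pi * t)⁻¹ * (Real.exp 1)⁻¹ * (2*ρ)
      = (4 * Real.pi)⁻¹ * (Real.exp 1)⁻¹ * (2*ρ) * Real.log (2/ρ^2) := by
    have e1 : ∀ t : ℝ, (4 * Real.pi * t)⁻¹ * (Real.exp 1)⁻¹ * (2*ρ)
        = ((4 * Real.pi)⁻¹ * (Real.exp 1)⁻¹ * (2*ρ)) * t⁻¹ := by
      intro t; rw [mul_inv]; ring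
    simp_rw [e1]
    rw [integral_const_mul, ← integral_Ioc_eq_integral_Ioo,
      ← intervalIntegral.integral_of_le hρ2lt.le, integral_inv_of_pos hρ2 two_pos]
  -- final log comparison
  have hlog : Real.log (1 + 1/(2*ρ)) ≤ Real.log (2/ρ^2) := by
    apply Real.log_le_log (by positivity)
    rw [le_div_iff₀ (by positivity)]
    have e2 : (1 + 1/(2*ρ)) * ρ^2 = ρ^2 + ρ/2 := by field_simp
    rw [e2]; nlinarith
  calc (4 * Real.pi * Real.exp 1)⁻¹ * ((2 * ρ) * Real.log (1 + 1 / (2 * ρ)))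
      = ((4 * Real.pi)⁻¹ * (Real.exp 1)⁻¹ * (2*ρ)) * Real.log (1 + 1/(2*ρ)) := by
        rw [mul_inv]; ring
    _ ≤ ((4 * Real.pi)⁻¹ * (Real.exp 1)⁻¹ * (2*ρ)) * Real.log (2/ρ^2) :=
        mul_le_mul_of_nonneg_left hlog (by positivity)
    _ = ∫ t in Set.Ioo (ρ^2) 2, (4 * Real.pi * t)⁻¹ * (Real.exp 1)⁻¹ * (2*ρ) := by
        rw [hcalc]
    _ ≤ ∫ t in Set.Ioo (ρ^2) 2, f t := step1
    _ ≤ ∫ t in Set.Ioo (0:ℝ) 2, f t := step2
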